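/- If Lab is a complete labelling of Γ, then the set {a : Lab(a) = in} is a complete extension of Γ. -/
import Mathlib


variable {α : Type*}

inductive Label | IN | OUT | UNDEC
deriving DecidableEq

def conflictFree (att : α → α → Prop) (T : Set α) : Prop :=
  ∀ a ∈ T, ∀ b ∈ T, ¬ att a b

def acceptable (att : α → α → Prop) (T : Set α) (a : α) : Prop :=
  ∀ b, att b a → ∃ c ∈ T, att c b

def admissible (att : α → α → Prop) (T : Set α) : Prop :=
  conflictFree att T ∧ ∀ a ∈ T, acceptable att T a

def complete (att : α → α → Prop) (T : Set α) : Prop :=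
  admissible att T ∧ ∀ a, acceptable att T a → a ∈ T

def completeLab (att : α → α → Prop) (Lab : α → Label) : Prop :=
  (∀ a, Lab a = Label.IN ↔ ∀ b, att b a → Lab b = Label.OUT) ∧
  (∀ a, Lab a = Label.OUT ↔ ∃ b, att b a ∧ Lab b = Label.IN)

theorem inSet_of_completeLab (att : α → α → Prop) (Lab : α → Label)
    (h : completeLab att Lab) :
    complete att {a | Lab a = Label.IN} := by
  obtain ⟨hIN, hOUT⟩ := h
  refine ⟨⟨?_, ?_⟩, ?_⟩
  · intro a ha b hb hab
    have := (hIN b).mp hb a hab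
    rw [ha] at this; exact Label.noConfusion this
  · intro a ha b hba
    have hb := (hIN a).mp ha b hba
    obtain ⟨c, hc, hcIn⟩ := (hOUT b).mp hb
    exact ⟨c, hcIn, hc⟩
  · intro a hacc
    refine (hIN a).mpr fun b hb => ?_
    obtain ⟨c, hc, hcb⟩ := hacc b hb
    exact (hOUT b).mpr ⟨c, hcb, hc⟩
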